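/- For any prime p ≥ 5, H_{⌊p/4⌋} ≡ -3*q_p(2) (mod p), where H_n is the n-th harmonic number and q_p(2) = (2^{p-1}-1)/p. -/

import Mathlib

open Finset

-- C(p-1, j) ≡ (-1)^j (mod p)
lemma HQC_choose_neg_one (p : ℕ) (hp : p.Prime) :
    ∀ j, j ≤ p - 1 → ((Nat.choose (p-1) j : ZMod p) : ZMod p) = (-1)^j := by
  haveI : Fact p.Prime := ⟨hp⟩
  intro j
  induction j with
  | zero => intro _; simp
  | succ j ih =>
    intro hj
    have hj' : j ≤ p - 1 := by omega
    have h1 : Nat.choose p (j+1) = Nat.choose (p-1) j + Nat.choose (p-1) (j+1) := by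
      conv_lhs => rw [← Nat.succ_pred_eq_of_pos hp.pos]
      exact Nat.choose_succ_succ _ _
    have hdvd : p ∣ Nat.choose p (j+1) := hp.dvd_choose_self (Nat.succ_ne_zero j) (by omega)
    have h0 : ((Nat.choose p (j+1) : ℕ) : ZMod p) = 0 :=
      (ZMod.natCast_eq_zero_iff _ _).mpr hdvd
    have e : ((Nat.choose (p-1) j : ℕ) : ZMod p) + ((Nat.choose (p-1) (j+1) : ℕ) : ZMod p) = 0 := by
      have := congrArg (fun n : ℕ => (n : ZMod p)) h1
      push_cast at this
      rw [h0] at this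
      exact this.symm
    rw [ih hj'] at e
    rw [pow_succ]
    linear_combination e
lemma HQC_two_ne (p : ℕ) (hp : p.Prime) (hp5 : 5 ≤ p) : (2 : ZMod p) ≠ 0 := by
  intro h
  have h2 : ((2:ℕ) : ZMod p) = 0 := by exact_mod_cast h
  rw [ZMod.natCast_eq_zero_iff] at h2
  have := Nat.le_of_dvd (by norm_num) h2
  omega

lemma HQC_fermat (p : ℕ) (hp : p.Prime) (hp5 : 5 ≤ p) : p ∣ 2^(p-1) - 1 := by
  haveI : Fact p.Prime := ⟨hp⟩
  rw [← ZMod.natCast_eq_zero_iff]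
  have h1 : (1:ℕ) ≤ 2^(p-1) := Nat.one_le_two_pow
  push_cast [h1]
  rw [ZMod.pow_card_sub_one_eq_one (HQC_two_ne p hp hp5)]
  ring

-- sum of middle binomials
lemma HQC_sum_choose (p : ℕ) (hp : p.Prime) : ∑ k ∈ Icc 1 (p-1), Nat.choose p k = 2^p - 2 := by
  have h5 : 2 ≤ p := hp.two_le
  have hins : range (p+1) = insert 0 (insert p (Icc 1 (p-1))) := by
    ext x; simp [Finset.mem_Icc, Finset.mem_range]; omega
  have h0 : (0:ℕ) ∉ insert p (Icc 1 (p-1)) := by simp [Finset.mem_Icc]; omega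
  have hpn : p ∉ Icc 1 (p-1) := by simp [Finset.mem_Icc]; omega
  have := Nat.sum_range_choose p
  rw [hins, Finset.sum_insert h0, Finset.sum_insert hpn] at this
  simp [Nat.choose_self, Nat.choose_zero_right] at this
  omega

lemma HQC_ne (p k : ℕ) (hp : p.Prime) (h1 : 1 ≤ k) (h2 : k < p) : ((k:ℕ) : ZMod p) ≠ 0 := by
  haveI : Fact p.Prime := ⟨hp⟩
  rw [Ne, ZMod.natCast_eq_zero_iff]
  intro h
  have := Nat.le_of_dvd (by omega) h
  omega


lemma HQC_alt (p : ℕ) (hp : p.Prime) (hp5 : 5 ≤ p) :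
    (2 : ZMod p) * (((2^(p-1)-1)/p : ℕ) : ZMod p)
      = ∑ k ∈ Icc 1 (p-1), (-1)^(k-1) * ((k:ℕ) : ZMod p)⁻¹ := by
  haveI : Fact p.Prime := ⟨hp⟩
  set Q : ℕ := (2^(p-1)-1)/p with hQdef
  have hferm := HQC_fermat p hp hp5
  have hpQ : p * Q = 2^(p-1) - 1 := Nat.mul_div_cancel' hferm
  -- sum of c_k = 2 Q
  have hsum : ∑ k ∈ Icc 1 (p-1), (Nat.choose p k / p) = 2 * Q := by
    have hmul : p * ∑ k ∈ Icc 1 (p-1), (Nat.choose p k / p) = p * (2 * Q) := by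
      rw [Finset.mul_sum]
      have : ∀ k ∈ Icc 1 (p-1), p * (Nat.choose p k / p) = Nat.choose p k := by
        intro k hk
        simp only [Finset.mem_Icc] at hk
        exact Nat.mul_div_cancel' (hp.dvd_choose_self (by omega) (by omega))
      rw [Finset.sum_congr rfl this, HQC_sum_choose p hp]
      have h2 : 2 ^ p = 2 * 2^(p-1) := by
        conv_lhs => rw [show p = (p-1)+1 by omega]
        ring
      have h1 : (1:ℕ) ≤ 2^(p-1) := Nat.one_le_two_pow
      calc 2^p - 2 = 2 * (2^(p-1) - 1) := by omega
        _ = p * (2 * Q) := by rw [← hpQ]; ring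
    exact Nat.eq_of_mul_eq_mul_left hp.pos hmul
  -- cast to ZMod p
  have hcast := congrArg (fun n : ℕ => (n : ZMod p)) hsum
  simp only [Nat.cast_sum, Nat.cast_mul, Nat.cast_ofNat] at hcast
  rw [← hcast]
  apply Finset.sum_congr rfl
  intro k hk
  simp only [Finset.mem_Icc] at hk
  -- choose (p-1) (k-1) = (choose p k / p) * k
  have hck : Nat.choose (p-1) (k-1) = (Nat.choose p k / p) * k := by
    have h := Nat.add_one_mul_choose_eq (p-1) (k-1)
    rw [Nat.sub_add_cancel (by omega : 1 ≤ p), Nat.sub_add_cancel (by omega : 1 ≤ k)] at h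
    have hd : p ∣ Nat.choose p k := hp.dvd_choose_self (by omega) (by omega)
    have : p * Nat.choose (p-1) (k-1) = p * ((Nat.choose p k / p) * k) := by
      rw [h, show p * (Nat.choose p k / p * k) = p * (Nat.choose p k / p) * k by ring,
        Nat.mul_div_cancel' hd]
    exact Nat.eq_of_mul_eq_mul_left hp.pos this
  have hkne : ((k:ℕ) : ZMod p) ≠ 0 := HQC_ne p k hp (by omega) (by omega)
  have hc := congrArg (fun n : ℕ => (n : ZMod p)) hck
  simp only [Nat.cast_mul] at hc
  rw [HQC_choose_neg_one p hp (k-1) (by omega)] at hc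
  rw [eq_mul_inv_iff_mul_eq₀ hkne]
  exact hc.symm

lemma HQC_even_reindex {M : Type*} [AddCommMonoid M] (f : ℕ → M) (n : ℕ) :
    ∑ k ∈ (Icc 1 n).filter (fun k => Even k), f k = ∑ j ∈ Icc 1 (n/2), f (2*j) := by
  apply Finset.sum_bij' (fun k _ => k / 2) (fun j _ => 2 * j)
  case hi => intro a ha; simp only [Finset.mem_filter, Finset.mem_Icc, Nat.even_iff] at ha ⊢; omega
  case hj => intro a ha; simp only [Finset.mem_filter, Finset.mem_Icc, Nat.even_iff] at ha ⊢; omega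
  case left_neg => intro a ha; simp only [Finset.mem_filter, Finset.mem_Icc, Nat.even_iff] at ha; omega
  case right_neg => intro a ha; omega
  case h =>
    intro a ha; simp only [Finset.mem_filter, Finset.mem_Icc, Nat.even_iff] at ha
    congr 1; omega

lemma HQC_refl_term (p k : ℕ) (hp : p.Prime) (h2 : k < p) :
    ((k:ℕ) : ZMod p)⁻¹ = -(((p - k : ℕ) : ZMod p))⁻¹ := by
  haveI : Fact p.Prime := ⟨hp⟩
  have hc : ((p - k : ℕ) : ZMod p) = -(k : ZMod p) := by
    rw [Nat.cast_sub (le_of_lt h2), ZMod.natCast_self]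
    ring
  rw [hc, inv_neg, neg_neg]

lemma HQC_Hp1 (p : ℕ) (hp : p.Prime) (hp5 : 5 ≤ p) :
    ∑ k ∈ Icc 1 (p-1), ((k:ℕ) : ZMod p)⁻¹ = 0 := by
  haveI : Fact p.Prime := ⟨hp⟩
  have key : ∑ k ∈ Icc 1 (p-1), ((k:ℕ) : ZMod p)⁻¹
      = ∑ k ∈ Icc 1 (p-1), -(((k:ℕ) : ZMod p)⁻¹) := by
    apply Finset.sum_bij' (fun k _ => p - k) (fun k _ => p - k)
    case hi => intro a ha; simp only [Finset.mem_Icc] at ha ⊢; omega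
    case hj => intro a ha; simp only [Finset.mem_Icc] at ha ⊢; omega
    case left_neg => intro a ha; simp only [Finset.mem_Icc] at ha; omega
    case right_neg => intro a ha; simp only [Finset.mem_Icc] at ha; omega
    case h =>
      intro a ha
      simp only [Finset.mem_Icc] at ha
      rw [HQC_refl_term p a hp (by omega)]
  rw [Finset.sum_neg_distrib] at key
  have h2 : (2 : ZMod p) * ∑ k ∈ Icc 1 (p-1), ((k:ℕ) : ZMod p)⁻¹ = 0 := by
    linear_combination key
  exact (mul_eq_zero.mp h2).resolve_left (HQC_two_ne p hp hp5)

lemma HQC_odd_reflect (p : ℕ) (hp : p.Prime) (hp5 : 5 ≤ p) :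
    ∑ k ∈ (Icc 1 ((p-1)/2)).filter (fun k => ¬ Even k), ((k:ℕ) : ZMod p)⁻¹
      = -∑ k ∈ (Icc ((p-1)/2 + 1) (p-1)).filter (fun k => Even k), ((k:ℕ) : ZMod p)⁻¹ := by
  haveI : Fact p.Prime := ⟨hp⟩
  have hodd : p % 2 = 1 := Nat.odd_iff.mp (hp.odd_of_ne_two (by omega))
  rw [← Finset.sum_neg_distrib]
  apply Finset.sum_bij' (fun k _ => p - k) (fun k _ => p - k)
  case hi => intro a ha; simp only [Finset.mem_filter, Finset.mem_Icc, Nat.even_iff] at ha ⊢; omega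
  case hj => intro a ha; simp only [Finset.mem_filter, Finset.mem_Icc, Nat.even_iff] at ha ⊢; omega
  case left_neg => intro a ha; simp only [Finset.mem_filter, Finset.mem_Icc, Nat.even_iff] at ha; omega
  case right_neg => intro a ha; simp only [Finset.mem_filter, Finset.mem_Icc, Nat.even_iff] at ha; omega
  case h =>
    intro a ha
    simp only [Finset.mem_filter, Finset.mem_Icc, Nat.even_iff] at ha
    rw [HQC_refl_term p a hp (by omega)]
lemma HQC_core (p : ℕ) (hp : p.Prime) (hp5 : 5 ≤ p) :
    ∑ i ∈ Icc 1 (p/4), ((i:ℕ) : ZMod p)⁻¹ = -3 * (((2^(p-1)-1)/p : ℕ) : ZMod p) := by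
  haveI : Fact p.Prime := ⟨hp⟩
  have hodd : p % 2 = 1 := Nat.odd_iff.mp (hp.odd_of_ne_two (by omega))
  have htne : (2 : ZMod p) ≠ 0 := HQC_two_ne p hp hp5
  have hinv : (2 : ZMod p) * 2⁻¹ = 1 := mul_inv_cancel₀ htne
  set h := (p-1)/2 with hh
  set m := p/4 with hm
  have hh2 : h / 2 = m := by omega
  set Qb : ZMod p := (((2^(p-1)-1)/p : ℕ) : ZMod p) with hQb
  set A : ZMod p := ∑ k ∈ Icc 1 h, ((k:ℕ) : ZMod p)⁻¹ with hA
  set B : ZMod p := ∑ i ∈ Icc 1 m, ((i:ℕ) : ZMod p)⁻¹ with hB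
  -- even sums
  have E1 : ∑ k ∈ (Icc 1 (p-1)).filter (fun k => Even k), ((k:ℕ) : ZMod p)⁻¹
      = 2⁻¹ * A := by
    rw [HQC_even_reindex (fun k => ((k:ℕ) : ZMod p)⁻¹) (p-1)]
    have : (p-1)/2 = h := rfl
    rw [this, hA, Finset.mul_sum]
    apply Finset.sum_congr rfl
    intro j hj
    push_cast
    rw [mul_inv]
  have E2 : ∑ k ∈ (Icc 1 h).filter (fun k => Even k), ((k:ℕ) : ZMod p)⁻¹
      = 2⁻¹ * B := by
    rw [HQC_even_reindex (fun k => ((k:ℕ) : ZMod p)⁻¹) h, hh2, hB, Finset.mul_sum]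
    apply Finset.sum_congr rfl
    intro j hj
    push_cast
    rw [mul_inv]
  -- alternating sum identity
  have A1 : ∑ k ∈ Icc 1 (p-1), (-1:ZMod p)^(k-1) * ((k:ℕ) : ZMod p)⁻¹
      = (∑ k ∈ Icc 1 (p-1), ((k:ℕ) : ZMod p)⁻¹)
        - 2 * ∑ k ∈ (Icc 1 (p-1)).filter (fun k => Even k), ((k:ℕ) : ZMod p)⁻¹ := by
    rw [Finset.sum_filter, Finset.mul_sum, ← Finset.sum_sub_distrib]
    apply Finset.sum_congr rfl
    intro k hk
    simp only [Finset.mem_Icc] at hk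
    by_cases hke : Even k
    · have hko : Odd (k-1) := by
        rw [Nat.odd_iff]; rw [Nat.even_iff] at hke; omega
      rw [if_pos hke, hko.neg_one_pow]; ring
    · have hke' : Even (k-1) := by
        rw [Nat.even_iff] at hke ⊢; omega
      rw [if_neg hke, hke'.neg_one_pow]; ring
  have Halt := HQC_alt p hp hp5
  rw [← hQb] at Halt
  have hHp1 := HQC_Hp1 p hp hp5
  have hrefl := HQC_odd_reflect p hp hp5
  rw [← hh] at hrefl
  have hOdd := Finset.sum_filter_add_sum_filter_not (Icc 1 h) (fun k => Even k)
    (fun k => ((k:ℕ) : ZMod p)⁻¹)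
  have hunion : Icc 1 (p-1) = Icc 1 h ∪ Icc (h+1) (p-1) := by
    ext x; simp only [Finset.mem_Icc, Finset.mem_union]; omega
  have hdisj : Disjoint ((Icc 1 h).filter (fun k => Even k))
      ((Icc (h+1) (p-1)).filter (fun k => Even k)) := by
    apply Finset.disjoint_left.mpr
    intro a ha hb
    simp only [Finset.mem_filter, Finset.mem_Icc] at ha hb
    omega
  have hsplit : ∑ k ∈ (Icc 1 (p-1)).filter (fun k => Even k), ((k:ℕ) : ZMod p)⁻¹
      = (∑ k ∈ (Icc 1 h).filter (fun k => Even k), ((k:ℕ) : ZMod p)⁻¹)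
        + ∑ k ∈ (Icc (h+1) (p-1)).filter (fun k => Even k), ((k:ℕ) : ZMod p)⁻¹ := by
    rw [hunion, Finset.filter_union, Finset.sum_union hdisj]
  -- algebra
  have hAval : 2 * Qb = -A := by
    linear_combination Halt + A1 + hHp1 - 2*E1 - A*hinv
  have hArel : A = 2*(2⁻¹*B) - 2⁻¹*A := by
    linear_combination -hOdd + hrefl + hsplit + 2*E2 - E1
  have k1 : (2:ZMod p) * A = 2*B - A := by
    linear_combination 2*hArel - (A - 2*B)*hinv
  have k2 : (2:ZMod p) * B = 2 * (-3*Qb) := by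
    linear_combination (-1)*k1 + 3*hAval
  exact mul_left_cancel₀ htne k2

theorem harmonic_quarter_cong (p : ℕ) (hp : p.Prime) (hp5 : 5 ≤ p) :
    (p : ℤ) ∣ ((∑ i ∈ Finset.Icc 1 (p / 4), (1 : ℚ) / i)
      - (-3 * ((2 ^ (p - 1) - 1 : ℚ) / p))).num := by
  haveI : Fact p.Prime := ⟨hp⟩
  have hferm : p ∣ 2^(p-1) - 1 := HQC_fermat p hp hp5
  have hp0 : ((p:ℚ)) ≠ 0 := by exact_mod_cast hp.pos.ne'
  have h12 : (1:ℕ) ≤ 2^(p-1) := Nat.one_le_two_pow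
  have hcast : ((2:ℚ) ^ (p-1) - 1) / (p:ℚ) = (((2^(p-1)-1)/p : ℕ) : ℚ) := by
    rw [Nat.cast_div hferm hp0, Nat.cast_sub h12]
    push_cast
    ring
  rw [hcast]
  set Q : ℕ := (2^(p-1)-1)/p with hQ
  set N : ℕ := (p/4).factorial with hN
  set D : ℚ := (∑ i ∈ Finset.Icc 1 (p / 4), (1 : ℚ) / i) - (-3 * ((Q:ℕ) : ℚ)) with hD
  set c : ℕ := (∑ i ∈ Finset.Icc 1 (p/4), N / i) + 3 * Q * N with hc
  have hNdvd : ∀ i ∈ Finset.Icc 1 (p/4), i ∣ N := by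
    intro i hi
    simp only [Finset.mem_Icc] at hi
    exact Nat.dvd_factorial (by omega) hi.2
  -- key rational identity
  have key : ((c:ℕ) : ℚ) = D * (N:ℚ) := by
    rw [hc, hD]
    push_cast
    have hterm : ∀ i ∈ Finset.Icc 1 (p/4), (((N / i : ℕ) : ℚ)) = (1:ℚ)/i * N := by
      intro i hi
      simp only [Finset.mem_Icc] at hi
      have hi0 : ((i:ℚ)) ≠ 0 := by
        have : 0 < i := by omega
        exact_mod_cast this.ne'
      rw [Nat.cast_div (hNdvd i (by simp [Finset.mem_Icc]; omega)) hi0]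
      ring
    rw [Finset.sum_congr rfl hterm, sub_mul, Finset.sum_mul]
    ring
  -- p divides c
  have hpc : p ∣ c := by
    rw [← ZMod.natCast_eq_zero_iff]
    rw [hc]
    push_cast
    have hterm : ∀ i ∈ Finset.Icc 1 (p/4), (((N / i : ℕ) : ZMod p)) = (N : ZMod p) * ((i:ℕ) : ZMod p)⁻¹ := by
      intro i hi
      simp only [Finset.mem_Icc] at hi
      have hine : ((i:ℕ) : ZMod p) ≠ 0 := HQC_ne p i hp (by omega) (by omega)
      rw [eq_mul_inv_iff_mul_eq₀ hine, ← Nat.cast_mul, Nat.div_mul_cancel (hNdvd i (by simp [Finset.mem_Icc]; omega))]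
    rw [Finset.sum_congr rfl hterm, ← Finset.mul_sum, HQC_core p hp hp5]
    ring
  -- from ℚ identity to ℤ
  have h2 : (D.num : ℚ) * (N:ℚ) = ((c:ℕ) : ℚ) * (D.den : ℚ) := by
    rw [← Rat.mul_den_eq_num, key]; ring
  have hZ : D.num * (N:ℤ) = ((c:ℕ):ℤ) * ((D.den : ℕ):ℤ) := by exact_mod_cast h2
  have hdvd1 : (p:ℤ) ∣ D.num * (N:ℤ) := by
    rw [hZ]
    exact Dvd.dvd.mul_right (Int.natCast_dvd_natCast.mpr hpc) _
  have hpN : ¬ (p:ℤ) ∣ (N:ℤ) := by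
    rw [Int.natCast_dvd_natCast, hN, hp.dvd_factorial]
    omega
  have hpint : Prime (p:ℤ) := Nat.prime_iff_prime_int.mp hp
  exact (hpint.dvd_mul.mp hdvd1).resolve_right hpN
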